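/- arXiv:2010.02143 — 3 statements merged into one kernel-verified Lean document; each statement's English description precedes it below -/
import Mathlib

section
/- For all nonnegative integers m and n, the q-series identity 1/((q)_m (q)_n) = \sum_{n_2=0}^{\min(m,n)} q^{(m-n_2)(n-n_2)} / ((q)_{m-n_2} (q)_{n-n_2} (q)_{n_2}) holds as an identity of formal power series in q. -/
open PowerSeries

/-- The q-Pochhammer symbol `(q;q)_k = ∏_{i=1}^k (1 - q^i)` as a formal power series in `q`. -/
noncomputable def qPoch (k : ℕ) : PowerSeries ℚ :=
  ∏ i ∈ Finset.range k, (1 - (X : PowerSeries ℚ) ^ (i + 1))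

/-- Gaussian binomial coefficients as power series, via the Pascal recursion. -/
noncomputable def G : ℕ → ℕ → PowerSeries ℚ
  | _, 0 => 1
  | 0, _ + 1 => 0
  | m + 1, j + 1 => G m (j + 1) + X ^ (m - j) * G m j

/-- Partial Pochhammer product `∏_{i<j} (1 - q^{n-i})`. -/
noncomputable def P (n j : ℕ) : PowerSeries ℚ :=
  ∏ i ∈ Finset.range j, (1 - (X : PowerSeries ℚ) ^ (n - i))

lemma qPoch_succ (k : ℕ) : qPoch (k + 1) = qPoch k * (1 - (X : PowerSeries ℚ) ^ (k + 1)) := by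
  simp [qPoch, Finset.prod_range_succ]

lemma P_succ (n j : ℕ) : P n (j + 1) = P n j * (1 - (X : PowerSeries ℚ) ^ (n - j)) := by
  simp [P, Finset.prod_range_succ]

lemma P_zero_of_lt {n j : ℕ} (h : n < j) : P n j = 0 := by
  apply Finset.prod_eq_zero (Finset.mem_range.mpr h)
  simp

lemma G_zero_of_lt : ∀ m j : ℕ, m < j → G m j = 0 := by
  intro m
  induction m with
  | zero => intro j hj; cases j with
    | zero => omega
    | succ j => rfl
  | succ m ih =>
    intro j hj
    cases j with
    | zero => omega
    | succ j =>
      show G m (j + 1) + X ^ (m - j) * G m j = 0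
      rw [ih (j + 1) (by omega), ih j (by omega)]
      ring

lemma G_mul : ∀ m j : ℕ, j ≤ m → G m j * (qPoch (m - j) * qPoch j) = qPoch m := by
  intro m
  induction m with
  | zero => intro j hj
            interval_cases j
            show (1 : PowerSeries ℚ) * (qPoch 0 * qPoch 0) = qPoch 0
            simp [qPoch]
  | succ m ih =>
    intro j hj
    cases j with
    | zero =>
      show (1 : PowerSeries ℚ) * (qPoch (m + 1) * qPoch 0) = qPoch (m + 1)
      simp [qPoch]
    | succ j =>
      show (G m (j + 1) + X ^ (m - j) * G m j) * (qPoch (m + 1 - (j + 1)) * qPoch (j + 1)) =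
        qPoch (m + 1)
      rw [Nat.succ_sub_succ]
      by_cases hjm : j + 1 ≤ m
      · have ih1 := ih (j + 1) hjm
        have ih2 := ih j (by omega)
        have e1 : qPoch (m - j) = qPoch (m - j - 1) * (1 - (X : PowerSeries ℚ) ^ (m - j)) := by
          have h := qPoch_succ (m - j - 1)
          rwa [show m - j - 1 + 1 = m - j by omega] at h
        have e2 : m - (j + 1) = m - j - 1 := by omega
        rw [e2] at ih1
        rw [e1] at ih2 ⊢
        rw [qPoch_succ m, qPoch_succ j,
          show (X : PowerSeries ℚ) ^ (m + 1) = X ^ (m - j) * X ^ (j + 1) by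
            rw [← pow_add]; congr 1; omega] at *
        linear_combination (1 - (X : PowerSeries ℚ) ^ (m - j)) * ih1 +
          (X : PowerSeries ℚ) ^ (m - j) * (1 - (X : PowerSeries ℚ) ^ (j + 1)) * ih2
      · -- j = m
        have hjeq : j = m := by omega
        subst hjeq
        rw [G_zero_of_lt j (j + 1) (by omega)]
        have ih2 := ih j le_rfl
        simp only [Nat.sub_self] at ih2 ⊢
        have h0 : qPoch 0 = 1 := by simp [qPoch]
        rw [h0] at ih2 ⊢
        rw [qPoch_succ j]
        have hG : G j j = 1 := by
          have hne : (qPoch j : PowerSeries ℚ) ≠ 0 := by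
            intro h
            have := congrArg (constantCoeff (R := ℚ)) h
            simp [qPoch, map_prod] at this
          have : G j j * qPoch j = 1 * qPoch j := by
            rw [one_mul]; linear_combination ih2
          exact mul_right_cancel₀ hne this
        rw [hG]
        ring
      
lemma key (m n : ℕ) :
    ∑ j ∈ Finset.range (m + 1),
      (X : PowerSeries ℚ) ^ ((m - j) * (n - j)) * (G m j * P n j) = 1 := by
  induction m with
  | zero =>
    rw [Finset.sum_range_one]
    simp [G, P]
  | succ m ih =>
    set g : ℕ → PowerSeries ℚ := fun j =>
      (X : PowerSeries ℚ) ^ ((m + 1 - j) * (n - j)) * (G m j * P n j) with hg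
    -- peel the j = 0 term
    rw [Finset.sum_range_succ' _ (m + 1)]
    have hsplit : ∀ j ∈ Finset.range (m + 1),
        (X : PowerSeries ℚ) ^ ((m + 1 - (j + 1)) * (n - (j + 1))) *
          (G (m + 1) (j + 1) * P n (j + 1)) =
        g (j + 1) +
          (X : PowerSeries ℚ) ^ ((m - j) * (n - (j + 1))) *
            (X ^ (m - j) * G m j * (P n j * (1 - X ^ (n - j)))) := by
      intro j hj
      show (X : PowerSeries ℚ) ^ ((m + 1 - (j + 1)) * (n - (j + 1))) *
          ((G m (j + 1) + X ^ (m - j) * G m j) * P n (j + 1)) = _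
      rw [hg]
      simp only [Nat.succ_sub_succ]
      rw [P_succ]
      ring
    rw [Finset.sum_congr rfl hsplit, Finset.sum_add_distrib]
    -- first piece plus the peeled term is the shifted sum of g
    have h1 : (∑ j ∈ Finset.range (m + 1), g (j + 1)) +
        (X : PowerSeries ℚ) ^ ((m + 1 - 0) * (n - 0)) * (G (m + 1) 0 * P n 0) =
        ∑ j ∈ Finset.range (m + 1), g j := by
      have e0 : (X : PowerSeries ℚ) ^ ((m + 1 - 0) * (n - 0)) * (G (m + 1) 0 * P n 0) = g 0 := by
        show (X : PowerSeries ℚ) ^ ((m + 1 - 0) * (n - 0)) * ((1 : PowerSeries ℚ) * P n 0) = g 0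
        simp [hg, G, P]
      rw [e0, ← Finset.sum_range_succ' g (m + 1), Finset.sum_range_succ g (m + 1)]
      have : g (m + 1) = 0 := by
        rw [hg]; simp only
        rw [G_zero_of_lt m (m + 1) (by omega)]
        ring
      rw [this, add_zero]
    rw [add_assoc, add_comm
      (∑ j ∈ Finset.range (m + 1),
        (X : PowerSeries ℚ) ^ ((m - j) * (n - (j + 1))) *
          (X ^ (m - j) * G m j * (P n j * (1 - X ^ (n - j))))),
      ← add_assoc, h1, ← Finset.sum_add_distrib]
    refine Eq.trans ?_ ih
    apply Finset.sum_congr rfl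
    intro j hj
    rw [Finset.mem_range] at hj
    rcases lt_or_ge j n with hjn | hjn
    · rw [hg]
      simp only
      have e1 : (m + 1 - j) * (n - j) = (m - j) * (n - j) + (n - j) := by
        have : m + 1 - j = (m - j) + 1 := by omega
        rw [this]; ring
      have e2 : (m - j) * (n - (j + 1)) + (m - j) = (m - j) * (n - j) := by
        have : n - j = (n - (j + 1)) + 1 := by omega
        rw [this]; ring
      rw [e1, pow_add, ← e2, pow_add]
      ring
    · -- n ≤ j : the (1 - X^(n-j)) factor vanishes and exponents are 0
      have hz : n - j = 0 := by omega
      have hz2 : n - (j + 1) = 0 := by omega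
      rw [hg]
      simp only [hz, hz2, Nat.mul_zero, pow_zero]
      ring

lemma constQPoch (k : ℕ) : constantCoeff (R := ℚ) (qPoch k) = 1 := by
  simp [qPoch, map_prod]

lemma qPoch_split (n j : ℕ) (h : j ≤ n) : qPoch (n - j) * P n j = qPoch n := by
  induction j with
  | zero => simp [P]
  | succ j ih =>
    have e1 : qPoch (n - (j + 1)) * (1 - (X : PowerSeries ℚ) ^ (n - j)) = qPoch (n - j) := by
      have hq := qPoch_succ (n - (j + 1))
      rw [show n - (j + 1) + 1 = n - j by omega] at hq
      rw [← hq]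
    rw [P_succ]
    calc qPoch (n - (j + 1)) * (P n j * (1 - (X : PowerSeries ℚ) ^ (n - j)))
        = qPoch (n - (j + 1)) * (1 - (X : PowerSeries ℚ) ^ (n - j)) * P n j := by ring
      _ = qPoch (n - j) * P n j := by rw [e1]
      _ = qPoch n := ih (by omega)

/-- For all nonnegative integers `m` and `n`,
`1/((q)_m (q)_n) = ∑_{n₂=0}^{min(m,n)} q^{(m-n₂)(n-n₂)} / ((q)_{m-n₂} (q)_{n-n₂} (q)_{n₂})`
as formal power series in `q`. -/
theorem durfee_rectangle_identity (m n : ℕ) :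
    (qPoch m * qPoch n)⁻¹ =
      ∑ j ∈ Finset.range (min m n + 1),
        (X : PowerSeries ℚ) ^ ((m - j) * (n - j)) *
          (qPoch (m - j) * qPoch (n - j) * qPoch j)⁻¹ := by
  rw [PowerSeries.inv_eq_iff_mul_eq_one (by simp [map_mul, constQPoch])]
  rw [Finset.sum_mul]
  have hterm : ∀ j ∈ Finset.range (min m n + 1),
      (X : PowerSeries ℚ) ^ ((m - j) * (n - j)) *
        (qPoch (m - j) * qPoch (n - j) * qPoch j)⁻¹ * (qPoch m * qPoch n) =
      (X : PowerSeries ℚ) ^ ((m - j) * (n - j)) * (G m j * P n j) := by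
    intro j hj
    rw [Finset.mem_range] at hj
    have hjm : j ≤ m := by omega
    have hjn : j ≤ n := by omega
    have hm := G_mul m j hjm
    have hn := qPoch_split n j hjn
    have hinv : (qPoch (m - j) * qPoch (n - j) * qPoch j)⁻¹ *
        (qPoch (m - j) * qPoch (n - j) * qPoch j) = 1 :=
      PowerSeries.inv_mul_cancel _ (by simp [map_mul, constQPoch])
    calc (X : PowerSeries ℚ) ^ ((m - j) * (n - j)) *
          (qPoch (m - j) * qPoch (n - j) * qPoch j)⁻¹ * (qPoch m * qPoch n)
        = (X : PowerSeries ℚ) ^ ((m - j) * (n - j)) *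
            (qPoch (m - j) * qPoch (n - j) * qPoch j)⁻¹ *
            ((G m j * (qPoch (m - j) * qPoch j)) * (qPoch (n - j) * P n j)) := by
          rw [hm, hn]
      _ = (X : PowerSeries ℚ) ^ ((m - j) * (n - j)) * (G m j * P n j) *
            ((qPoch (m - j) * qPoch (n - j) * qPoch j)⁻¹ *
              (qPoch (m - j) * qPoch (n - j) * qPoch j)) := by ring
      _ = _ := by rw [hinv, mul_one]
  rw [Finset.sum_congr rfl hterm]
  refine Eq.trans ?_ (key m n)
  apply Finset.sum_subset
  · intro j hj
    rw [Finset.mem_range] at hj ⊢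
    omega
  · intro j hj hj'
    rw [Finset.mem_range] at hj hj'
    have : n < j := by omega
    rw [P_zero_of_lt this]
    ring
end

section
/- Let V be a vertex algebra with Li filtration F_0(V) \supset F_1(V) \supset ..., where F_n(V) is spanned by u^{(1)}_{(-1-k_1)} ... u^{(r)}_{(-1-k_r)} 1 with k_1 + ... + k_r \geq n. Then for u in F_r(V), v in F_s(V) and n \geq 0, u_{(n)} v lies in F_{r+s-n}(V), and for arbitrary integer n, u_{(n)} v lies in F_{r+s-n-1}(V). -/
/-- A vertex algebra over `ℚ`: a vector space `V` with a vacuum vector, modes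
`op u n v = u₍ₙ₎ v`, bilinear in `u` and `v`, satisfying truncation, the vacuum and creation
properties, and the Borcherds identity (the sums in the Borcherds identity are finitely
supported by truncation, and are expressed with `finsum`). -/
structure VertexAlg (V : Type*) [AddCommGroup V] [Module ℚ V] where
  vac : V
  op : V → ℤ → V → V
  add_left : ∀ u v : V, ∀ n : ℤ, ∀ w : V, op (u + v) n w = op u n w + op v n w
  smul_left : ∀ (c : ℚ) (u : V) (n : ℤ) (w : V), op (c • u) n w = c • op u n w
  add_right : ∀ (u : V) (n : ℤ) (v w : V), op u n (v + w) = op u n v + op u n w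
  smul_right : ∀ (u : V) (n : ℤ) (c : ℚ) (w : V), op u n (c • w) = c • op u n w
  trunc : ∀ u v : V, ∃ N : ℤ, ∀ n ≥ N, op u n v = 0
  vac_op : ∀ v : V, op vac (-1) v = v
  vac_op' : ∀ (v : V) (n : ℤ), n ≠ -1 → op vac n v = 0
  create : ∀ u : V, op u (-1) vac = u
  create' : ∀ (u : V) (n : ℤ), 0 ≤ n → op u n vac = 0
  borcherds : ∀ (u v w : V) (p q r : ℤ),
    (∑ᶠ i : ℕ, ((Ring.choose p i : ℤ) : ℚ) • op (op u (r + i) v) (p + q - i) w) =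
      ∑ᶠ i : ℕ, ((-1 : ℚ) ^ i * ((Ring.choose r i : ℤ) : ℚ)) •
        (op u (p + r - i) (op v (q + i) w) -
          ((-1 : ℚ) ^ r) • op v (q + r - i) (op u (p + i) w))

/-- The Li filtration: `F_n(V)` is spanned by the vectors
`u⁽¹⁾₍₋₁₋ₖ₁₎ ⋯ u⁽ʳ⁾₍₋₁₋ₖᵣ₎ 𝟙` with `r ≥ 1`, `kᵢ ≥ 0` and `k₁ + ⋯ + kᵣ ≥ n`. -/
noncomputable def liFil {V : Type*} [AddCommGroup V] [Module ℚ V] (A : VertexAlg V) (n : ℕ) :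
    Submodule ℚ V :=
  Submodule.span ℚ
    {v : V | ∃ (r : ℕ) (_ : 1 ≤ r) (u : Fin r → V) (k : Fin r → ℕ),
      n ≤ ∑ i, k i ∧
      v = (List.ofFn fun i => (u i, k i)).foldr
            (fun p acc => A.op p.1 (-1 - (p.2 : ℤ)) acc) A.vac}

namespace LiAux

variable {V : Type*} [AddCommGroup V] [Module ℚ V] (A : VertexAlg V)

/-- The monomial associated to a list of (vector, shift) pairs. -/
def mon (L : List (V × ℕ)) : V :=
  L.foldr (fun p acc => A.op p.1 (-1 - (p.2 : ℤ)) acc) A.vac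

/-- Total degree of a list of (vector, shift) pairs. -/
def deg (L : List (V × ℕ)) : ℕ := (L.map Prod.snd).sum

lemma deg_nil : deg (V := V) [] = 0 := rfl

lemma deg_cons (b : V) (k : ℕ) (L : List (V × ℕ)) : deg ((b, k) :: L) = k + deg L := by
  simp [deg]

lemma deg_ofFn {r : ℕ} (u : Fin r → V) (k : Fin r → ℕ) :
    deg (List.ofFn fun i => (u i, k i)) = ∑ i, k i := by
  simp [deg, List.map_ofFn, Function.comp_def, List.sum_ofFn]

lemma deg_eq_sum (L : List (V × ℕ)) : deg L = ∑ i : Fin L.length, (L.get i).2 := by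
  have h1 : L.map Prod.snd = List.ofFn (fun i => (L.get i).2) := by
    conv_lhs => rw [← List.ofFn_get L]
    rw [List.map_ofFn]
    rfl
  rw [deg, h1, List.sum_ofFn]

lemma op_zero_right (a : V) (m : ℤ) : A.op a m 0 = 0 := by
  have h := A.smul_right a m 0 0
  simpa using h

lemma op_zero_left (m : ℤ) (w : V) : A.op 0 m w = 0 := by
  have h := A.smul_left 0 0 m w
  simpa using h

lemma fil_anti {m n : ℕ} (h : n ≤ m) : liFil A m ≤ liFil A n := by
  apply Submodule.span_mono
  rintro x ⟨r, hr, u, k, hk, hx⟩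
  exact ⟨r, hr, u, k, le_trans h hk, hx⟩

/-- Every monomial of degree `≥ n` lies in `F_n`. -/
lemma mon_mem (L : List (V × ℕ)) {n : ℕ} (hn : n ≤ deg L) : mon A L ∈ liFil A n := by
  rcases L with _ | ⟨p, L'⟩
  · -- the vacuum; here `n = 0`
    have hn0 : n = 0 := by simpa [deg_nil] using hn
    subst hn0
    apply Submodule.subset_span
    refine ⟨1, le_refl 1, fun _ => A.vac, fun _ => 0, by simp, ?_⟩
    show mon A [] = (List.ofFn fun _ : Fin 1 => (A.vac, 0)).foldr
      (fun p acc => A.op p.1 (-1 - (p.2 : ℤ)) acc) A.vac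
    simp only [List.ofFn_succ, List.ofFn_zero, List.foldr_cons, List.foldr_nil]
    show A.vac = A.op A.vac (-1 - ((0 : ℕ) : ℤ)) A.vac
    norm_num [A.vac_op]
  · apply Submodule.subset_span
    refine ⟨(p :: L').length, by simp, fun i => ((p :: L').get i).1,
      fun i => ((p :: L').get i).2, ?_, ?_⟩
    · rw [deg_eq_sum] at hn
      exact hn
    · show mon A (p :: L') = _
      have : (List.ofFn fun i => (((p :: L').get i).1, ((p :: L').get i).2)) = p :: L' := by
        simp only [Prod.mk.eta]
        exact List.ofFn_get _
      rw [this]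
      rfl

lemma mem_zero (x : V) : x ∈ liFil A 0 := by
  have h := mon_mem A [(x, 0)] (n := 0) (by simp [deg])
  have hx : mon A [(x, 0)] = x := by
    show A.op x (-1 - ((0 : ℕ) : ℤ)) A.vac = x
    norm_num [A.create]
  rwa [hx] at h

/-- Membership in a submodule is preserved by modes applied on the right of a span. -/
lemma span_op_right (a : V) (m : ℤ) {S : Set V} {M : Submodule ℚ V}
    (h : ∀ x ∈ S, A.op a m x ∈ M) {x : V} (hx : x ∈ Submodule.span ℚ S) :
    A.op a m x ∈ M := by
  induction hx using Submodule.span_induction with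
  | mem y hy => exact h y hy
  | zero => rw [op_zero_right]; exact M.zero_mem
  | add y z _ _ ihy ihz => rw [A.add_right]; exact M.add_mem ihy ihz
  | smul c y _ ih => rw [A.smul_right]; exact M.smul_mem c ih

lemma span_op_left (m : ℤ) (w : V) {S : Set V} {M : Submodule ℚ V}
    (h : ∀ x ∈ S, A.op x m w ∈ M) {x : V} (hx : x ∈ Submodule.span ℚ S) :
    A.op x m w ∈ M := by
  induction hx using Submodule.span_induction with
  | mem y hy => exact h y hy
  | zero => rw [op_zero_left]; exact M.zero_mem
  | add y z _ _ ihy ihz => rw [A.add_left]; exact M.add_mem ihy ihz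
  | smul c y _ ih => rw [A.smul_left]; exact M.smul_mem c ih

/-- A negative mode raises the filtration degree. -/
lemma neg_mode_mem (b : V) (k : ℕ) {n : ℕ} {x : V} (hx : x ∈ liFil A n) :
    A.op b (-1 - (k : ℤ)) x ∈ liFil A (n + k) := by
  refine span_op_right A b _ ?_ hx
  rintro y ⟨r, hr, u, k', hk', rfl⟩
  have hy : (List.ofFn fun i => (u i, k' i)).foldr
      (fun p acc => A.op p.1 (-1 - (p.2 : ℤ)) acc) A.vac
      = mon A (List.ofFn fun i => (u i, k' i)) := rfl
  rw [hy]
  have : A.op b (-1 - (k : ℤ)) (mon A (List.ofFn fun i => (u i, k' i)))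
      = mon A ((b, k) :: List.ofFn fun i => (u i, k' i)) := rfl
  rw [this]
  refine mon_mem A _ ?_
  rw [deg_cons, deg_ofFn]
  omega

lemma finsum_mem' {M : Submodule ℚ V} (f : ℕ → V) (h : ∀ i, f i ∈ M) : (∑ᶠ i, f i) ∈ M := by
  by_cases hf : (Function.support f).Finite
  · rw [finsum_eq_sum f hf]
    exact Submodule.sum_mem M fun i _ => h i
  · rw [finsum_of_infinite_support hf]
    exact M.zero_mem

/-- Key lemma A: a single mode applied to a monomial. -/
lemma lemA (L : List (V × ℕ)) : ∀ (a : V) (m : ℤ),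
    A.op a m (mon A L) ∈ liFil A (((deg L : ℤ) - m - 1).toNat) ∧
    (0 ≤ m → A.op a m (mon A L) ∈ liFil A (((deg L : ℤ) - m).toNat)) := by
  induction L with
  | nil =>
    intro a m
    constructor
    · rcases lt_trichotomy m (-1) with hm | hm | hm
      · -- m ≤ -2 : a_(m) 1 is a monomial of degree -m-1
        obtain ⟨j, hj⟩ : ∃ j : ℕ, m = -1 - (j : ℤ) := ⟨(-1 - m).toNat, by omega⟩
        have h := mon_mem A [(a, j)] (n := ((deg ([] : List (V × ℕ)) : ℤ) - m - 1).toNat)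
          (by simp only [deg_cons, deg_nil]; omega)
        have hx : mon A [(a, j)] = A.op a m A.vac := by
          show A.op a (-1 - (j : ℤ)) A.vac = A.op a m A.vac
          rw [hj]
        rwa [hx] at h
      · subst hm
        have : A.op a (-1) (mon A []) = a := A.create a
        rw [this]
        have : ((deg ([] : List (V × ℕ)) : ℤ) - (-1) - 1).toNat = 0 := by
          simp [deg_nil]
        rw [this]
        exact mem_zero A a
      · have : A.op a m (mon A []) = 0 := A.create' a m (by omega)
        rw [this]; exact Submodule.zero_mem _
    · intro hm
      have : A.op a m (mon A []) = 0 := A.create' a m hm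
      rw [this]; exact Submodule.zero_mem _
  | cons p L' ih =>
    rcases p with ⟨b, k⟩
    intro a m
    -- commutator formula:
    -- a_(m) (b_(-1-k) y) = b_(-1-k) (a_(m) y) + Σ_i C(m,i) (a_(i) b)_(m-1-k-i) y
    have h := A.borcherds a b (mon A L') m (-1 - (k : ℤ)) 0
    rw [finsum_eq_single (fun i : ℕ => ((-1 : ℚ) ^ i * ((Ring.choose (0 : ℤ) i : ℤ) : ℚ)) •
          (A.op a (m + 0 - i) (A.op b ((-1 - (k : ℤ)) + i) (mon A L')) -
            ((-1 : ℚ) ^ (0 : ℤ)) • A.op b ((-1 - (k : ℤ)) + 0 - i)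
              (A.op a (m + i) (mon A L')))) 0
      (fun i hi => by
        obtain ⟨j, rfl⟩ := Nat.exists_eq_succ_of_ne_zero hi
        simp [Ring.choose_zero_succ])] at h
    simp only [Ring.choose_zero_right, Int.cast_one, mul_one, pow_zero, one_mul, one_smul,
      zpow_zero, Nat.cast_zero, add_zero, sub_zero] at h
    -- h : (∑ᶠ i, C(m,i) • (a_(i) b)_(m + (-1-k) - i) y)
    --      = a_(m) (b_(-1-k) y) - b_(-1-k) (a_(m) y)
    have h' : A.op a m (A.op b (-1 - (k : ℤ)) (mon A L')) =
        (∑ᶠ i : ℕ, ((Ring.choose m i : ℤ) : ℚ) •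
          A.op (A.op a (0 + (i : ℤ)) b) (m + (-1 - (k : ℤ)) - i) (mon A L'))
        + A.op b (-1 - (k : ℤ)) (A.op a m (mon A L')) := by
      rw [h]; abel
    have hgoal : A.op a m (mon A ((b, k) :: L')) =
        A.op a m (A.op b (-1 - (k : ℤ)) (mon A L')) := rfl
    -- membership of each piece, for any target `t` with `(t : ℤ) ≤ deg L' + k - m` (for the
    -- commutator sum) resp. suitable bounds for the leading term
    have sum_mem : ∀ t : ℕ, (t : ℤ) ≤ (deg L' : ℤ) + k - m →
        (∑ᶠ i : ℕ, ((Ring.choose m i : ℤ) : ℚ) •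
          A.op (A.op a (0 + (i : ℤ)) b) (m + (-1 - (k : ℤ)) - i) (mon A L')) ∈ liFil A t := by
      intro t ht
      refine finsum_mem' _ fun i => Submodule.smul_mem _ _ ?_
      set c := A.op a (0 + (i : ℤ)) b with hc
      rcases lt_or_ge (m + (-1 - (k : ℤ)) - i) 0 with hmode | hmode
      · obtain ⟨j, hj⟩ : ∃ j : ℕ, m + (-1 - (k : ℤ)) - i = -1 - (j : ℤ) :=
          ⟨(-1 - (m + (-1 - (k : ℤ)) - i)).toNat, by omega⟩
        rw [hj]
        have hmem := neg_mode_mem A c j (mon_mem A L' (le_refl _))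
        exact fil_anti A (by omega) hmem
      · have hmem := (ih c (m + (-1 - (k : ℤ)) - i)).2 hmode
        refine fil_anti A ?_ hmem
        omega
    constructor
    · rw [deg_cons]
      rcases Nat.eq_zero_or_pos ((((k + deg L' : ℕ) : ℤ) - m - 1).toNat) with h0 | hpos
      · rw [h0]; exact mem_zero A _
      · rw [hgoal, h']
        refine Submodule.add_mem _ (sum_mem _ ?_) ?_
        · omega
        · -- b_(-1-k) (a_(m) y), general bound
          have hmem := neg_mode_mem A b k (ih a m).1
          refine fil_anti A ?_ hmem
          omega
    · intro hm
      rw [deg_cons]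
      rcases Nat.eq_zero_or_pos ((((k + deg L' : ℕ) : ℤ) - m).toNat) with h0 | hpos
      · rw [h0]; exact mem_zero A _
      · rw [hgoal, h']
        refine Submodule.add_mem _ (sum_mem _ ?_) ?_
        · omega
        · have hmem := neg_mode_mem A b k ((ih a m).2 hm)
          refine fil_anti A ?_ hmem
          omega

/-- Key lemma A': a single mode applied to an element of the filtration. -/
lemma lemA' (a : V) (m : ℤ) {s : ℕ} {x : V} (hx : x ∈ liFil A s) :
    A.op a m x ∈ liFil A (((s : ℤ) - m - 1).toNat) ∧
    (0 ≤ m → A.op a m x ∈ liFil A (((s : ℤ) - m).toNat)) := by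
  constructor
  · refine span_op_right A a m ?_ hx
    rintro y ⟨r, hr, u, k, hk, rfl⟩
    have h := (lemA A (List.ofFn fun i => (u i, k i)) a m).1
    rw [deg_ofFn] at h
    exact fil_anti A (by omega) h
  · intro hm
    refine span_op_right A a m ?_ hx
    rintro y ⟨r, hr, u, k, hk, rfl⟩
    have h := (lemA A (List.ofFn fun i => (u i, k i)) a m).2 hm
    rw [deg_ofFn] at h
    exact fil_anti A (by omega) h

/-- Key lemma B: modes of a monomial applied to an element of the filtration. -/
lemma lemB (L : List (V × ℕ)) : ∀ (s : ℕ) (v : V), v ∈ liFil A s → ∀ n : ℤ,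
    A.op (mon A L) n v ∈ liFil A (((deg L : ℤ) + s - n - 1).toNat) ∧
    (0 ≤ n → A.op (mon A L) n v ∈ liFil A (((deg L : ℤ) + s - n).toNat)) := by
  induction L with
  | nil =>
    intro s v hv n
    constructor
    · rcases eq_or_ne n (-1) with hn | hn
      · subst hn
        have : A.op (mon A []) (-1) v = v := A.vac_op v
        rw [this]
        refine fil_anti A ?_ hv
        simp only [deg_nil]; omega
      · have : A.op (mon A []) n v = 0 := A.vac_op' v n hn
        rw [this]; exact Submodule.zero_mem _
    · intro hn
      have : A.op (mon A []) n v = 0 := A.vac_op' v n (by omega)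
      rw [this]; exact Submodule.zero_mem _
  | cons p L' ih =>
    rcases p with ⟨a, k⟩
    intro s v hv n
    -- iterate formula: Borcherds with p = 0, q = n, r = -1-k
    have h := A.borcherds a (mon A L') v 0 n (-1 - (k : ℤ))
    rw [finsum_eq_single (fun i : ℕ => ((Ring.choose (0 : ℤ) i : ℤ) : ℚ) •
          A.op (A.op a ((-1 - (k : ℤ)) + i) (mon A L')) (0 + n - i) v) 0
      (fun i hi => by
        obtain ⟨j, rfl⟩ := Nat.exists_eq_succ_of_ne_zero hi
        simp [Ring.choose_zero_succ])] at h
    simp only [Ring.choose_zero_right, Int.cast_one, one_smul, Nat.cast_zero, add_zero,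
      sub_zero, zero_add] at h
    -- h : a_(-1-k) y)_(n) v = Σᶠ i, (-1)^i C(-1-k,i) •
    --       (a_(-1-k-i) (y_(n+i) v) - (-1)^(-1-k) • y_(n-1-k-i) (a_(i) v))
    have hgoal : A.op (mon A ((a, k) :: L')) n v =
        A.op (A.op a (-1 - (k : ℤ)) (mon A L')) n v := rfl
    -- membership of each summand
    have term_mem : ∀ t : ℕ, ((t : ℤ) ≤ (deg L' : ℤ) + k + s - n - 1 ∨
          (0 ≤ n ∧ (t : ℤ) ≤ (deg L' : ℤ) + k + s - n)) → ∀ i : ℕ,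
        ((-1 : ℚ) ^ i * ((Ring.choose (-1 - (k : ℤ)) i : ℤ) : ℚ)) •
          (A.op a (-1 - (k : ℤ) - i) (A.op (mon A L') (n + i) v) -
            ((-1 : ℚ) ^ (-1 - (k : ℤ))) • A.op (mon A L') (n + (-1 - (k : ℤ)) - i)
              (A.op a (i : ℤ) v)) ∈ liFil A t := by
      intro t ht i
      refine Submodule.smul_mem _ _ (Submodule.sub_mem _ ?_ (Submodule.smul_mem _ _ ?_))
      · -- a_(-1-k-i) (y_(n+i) v)
        obtain ⟨j, hj⟩ : ∃ j : ℕ, -1 - (k : ℤ) - i = -1 - (j : ℤ) := ⟨k + i, by push_cast; ring⟩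
        rw [hj]
        rcases lt_or_ge (n + (i : ℤ)) 0 with hni | hni
        · have hinner := (ih s v hv (n + i)).1
          have hmem := neg_mode_mem A a j hinner
          refine fil_anti A ?_ hmem
          rcases ht with ht | ⟨hn, ht⟩ <;> omega
        · have hinner := (ih s v hv (n + i)).2 hni
          have hmem := neg_mode_mem A a j hinner
          refine fil_anti A ?_ hmem
          rcases ht with ht | ⟨hn, ht⟩ <;> omega
      · -- y_(n-1-k-i) (a_(i) v)
        have hinner := (lemA' A a (i : ℤ) hv).2 (by positivity)
        have houter := (ih _ _ hinner (n + (-1 - (k : ℤ)) - i)).1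
        refine fil_anti A ?_ houter
        rcases ht with ht | ⟨hn, ht⟩ <;> omega
    constructor
    · rw [deg_cons]
      rcases Nat.eq_zero_or_pos ((((k + deg L' : ℕ) : ℤ) + s - n - 1).toNat) with h0 | hpos
      · rw [h0]; exact mem_zero A _
      · rw [hgoal, h]
        refine finsum_mem' _ fun i => term_mem _ (Or.inl ?_) i
        push_cast
        push_cast at hpos
        omega
    · intro hn
      rw [deg_cons]
      rcases Nat.eq_zero_or_pos ((((k + deg L' : ℕ) : ℤ) + s - n).toNat) with h0 | hpos
      · rw [h0]; exact mem_zero A _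
      · rw [hgoal, h]
        refine finsum_mem' _ fun i => term_mem _ (Or.inr ⟨hn, ?_⟩) i
        push_cast
        push_cast at hpos
        omega

end LiAux

/-- For `u ∈ F_r(V)` and `v ∈ F_s(V)`: if `n ≥ 0` then `u₍ₙ₎v ∈ F_{r+s-n}(V)`, and for an
arbitrary integer `n`, `u₍ₙ₎v ∈ F_{r+s-n-1}(V)` (indices truncated at `0`). -/
theorem li_filtration_modes (V : Type*) [AddCommGroup V] [Module ℚ V] (A : VertexAlg V)
    (r s : ℕ) (u v : V) (hu : u ∈ liFil A r) (hv : v ∈ liFil A s) :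
    (∀ n : ℕ, A.op u n v ∈ liFil A (r + s - n)) ∧
    (∀ n : ℤ, A.op u n v ∈ liFil A ((r + s - n - 1 : ℤ).toNat)) := by
  constructor
  · intro n
    refine LiAux.span_op_left A (n : ℤ) v ?_ hu
    rintro y ⟨ρ, hρ, u', k', hk', rfl⟩
    have h := (LiAux.lemB A (List.ofFn fun i => (u' i, k' i)) s v hv (n : ℤ)).2
      (by positivity)
    rw [LiAux.deg_ofFn] at h
    exact LiAux.fil_anti A (by omega) h
  · intro n
    refine LiAux.span_op_left A n v ?_ hu
    rintro y ⟨ρ, hρ, u', k', hk', rfl⟩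
    have h := (LiAux.lemB A (List.ofFn fun i => (u' i, k' i)) s v hv n).1
    rw [LiAux.deg_ofFn] at h
    exact LiAux.fil_anti A (by omega) h
end

section
/- For the quadratic forms B and B' of type A_{n-1} (Theorem 1.1 of the paper) and the Cartan matrix A of type A_{n-1}: for every k in N^{n-1} and every nonnegative integer solution m of the linear system \lambda_i(m) = k_i (where \lambda_i = \sum_{1 \leq s \leq i < \ell \leq n} m_{s,\ell}), the differences B(m) - (1/2) k^T A k and B'(m) - (1/2) k^T A k are nonnegative integers. -/
/-- Index set for the positive roots of `A_{n-1}`: pairs `(i,j)` with `1 ≤ i < j ≤ n`,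
encoded as pairs `(a,b)` of elements of `Fin n` with `a < b` (so `i = a+1`, `j = b+1`). -/
abbrev PairIdx (n : ℕ) := {p : Fin n × Fin n // p.1 < p.2}

/-- The quadratic form `B'(m)` of Theorem 1.1(b): `∑ m_{i₁,j₁} m_{i₂,j₂}` over pairs with
`i₁ ≤ i₂`, `j₁ ≤ j₂`, `j₁ > i₂`. -/
def Bform' (n : ℕ) (m : PairIdx n → ℕ) : ℕ :=
  ∑ p₁ : PairIdx n, ∑ p₂ : PairIdx n,
    if p₁.1.1 ≤ p₂.1.1 ∧ p₁.1.2 ≤ p₂.1.2 ∧ (p₂.1.1 : ℕ) < (p₁.1.2 : ℕ) then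
      m p₁ * m p₂ else 0

/-- The quadratic form `B(m)` of Theorem 1.1(a), given by four sums:
(1) `i₁ < i₂`, `j₁ < j₂`, `j₁ > i₂ + 1`; (2) `i₁ = i₂`, `j₁ ≤ j₂`;
(3) `j₁ = j₂`, `i₁ < i₂`; (4) `m_{i,i+1} m_{j,j'}` with `j < i < i+1 < j'`. -/
def Bform (n : ℕ) (m : PairIdx n → ℕ) : ℕ :=
  (∑ p₁ : PairIdx n, ∑ p₂ : PairIdx n,
    if p₁.1.1 < p₂.1.1 ∧ p₁.1.2 < p₂.1.2 ∧ (p₂.1.1 : ℕ) + 1 < (p₁.1.2 : ℕ) then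
      m p₁ * m p₂ else 0) +
  (∑ p₁ : PairIdx n, ∑ p₂ : PairIdx n,
    if p₁.1.1 = p₂.1.1 ∧ p₁.1.2 ≤ p₂.1.2 then m p₁ * m p₂ else 0) +
  (∑ p₁ : PairIdx n, ∑ p₂ : PairIdx n,
    if p₁.1.2 = p₂.1.2 ∧ p₁.1.1 < p₂.1.1 then m p₁ * m p₂ else 0) +
  (∑ p₁ : PairIdx n, ∑ p₂ : PairIdx n,
    if (p₁.1.2 : ℕ) = (p₁.1.1 : ℕ) + 1 ∧ p₂.1.1 < p₁.1.1 ∧ p₁.1.2 < p₂.1.2 then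
      m p₁ * m p₂ else 0)

/-- `λᵢ = ∑_{1 ≤ s ≤ i < ℓ ≤ n} m_{s,ℓ}`  (here `i` ranges over `1, ..., n-1`). -/
def lam (n : ℕ) (m : PairIdx n → ℕ) (i : ℕ) : ℕ :=
  ∑ p : PairIdx n, if (p.1.1 : ℕ) + 1 ≤ i ∧ i ≤ (p.1.2 : ℕ) then m p else 0

/-- `½ kᵀAk = ∑ᵢ kᵢ² - ∑ᵢ kᵢ k_{i+1}` for the Cartan matrix `A` of type `A_{n-1}`. -/
def halfCartanForm (n : ℕ) (k : ℕ → ℕ) : ℤ :=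
  (∑ i ∈ Finset.Icc 1 (n - 1), (k i : ℤ) ^ 2) -
    ∑ i ∈ Finset.Icc 1 (n - 2), (k i : ℤ) * (k (i + 1) : ℤ)

namespace QFaux
open Finset
variable {n : ℕ}

/-- Left endpoint of the straddle interval of `p` (in `1, ..., n-1` coordinates). -/
def uu (p : PairIdx n) : ℕ := (p.1.1 : ℕ) + 1
/-- Right endpoint of the straddle interval of `p`. -/
def vv (p : PairIdx n) : ℕ := (p.1.2 : ℕ)

lemma uu_le_vv (p : PairIdx n) : uu p ≤ vv p := p.2
lemma vv_lt (p : PairIdx n) : vv p < n := p.1.2.is_lt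

lemma lam_cast (m : PairIdx n → ℕ) (i : ℕ) :
    (lam n m i : ℤ) = ∑ p : PairIdx n, if uu p ≤ i ∧ i ≤ vv p then (m p : ℤ) else 0 := by
  simp [lam, uu, vv, apply_ite (Nat.cast : ℕ → ℤ)]

/-- generic expansion of a product of two "lambda-type" sums into a double sum with
interval-count coefficients. -/
lemma expand (m : PairIdx n → ℕ) (s : Finset ℕ) (F G : PairIdx n → ℕ → Prop)
    [∀ p i, Decidable (F p i)] [∀ p i, Decidable (G p i)] :
    (∑ i ∈ s, (∑ p : PairIdx n, if F p i then (m p : ℤ) else 0) *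
        (∑ p : PairIdx n, if G p i then (m p : ℤ) else 0))
      = ∑ p₁ : PairIdx n, ∑ p₂ : PairIdx n,
          ((s.filter fun i => F p₁ i ∧ G p₂ i).card : ℤ) * ((m p₁ : ℤ) * (m p₂ : ℤ)) := by
  calc (∑ i ∈ s, (∑ p : PairIdx n, if F p i then (m p : ℤ) else 0) *
        (∑ p : PairIdx n, if G p i then (m p : ℤ) else 0))
      = ∑ i ∈ s, ∑ p₁ : PairIdx n, ∑ p₂ : PairIdx n,
          (if F p₁ i ∧ G p₂ i then (m p₁ : ℤ) * (m p₂ : ℤ) else 0) := by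
        refine sum_congr rfl fun i _ => ?_
        rw [Finset.sum_mul_sum]
        refine sum_congr rfl fun p₁ _ => sum_congr rfl fun p₂ _ => ?_
        by_cases h1 : F p₁ i <;> by_cases h2 : G p₂ i <;> simp [h1, h2]
    _ = ∑ p₁ : PairIdx n, ∑ i ∈ s, ∑ p₂ : PairIdx n,
          (if F p₁ i ∧ G p₂ i then (m p₁ : ℤ) * (m p₂ : ℤ) else 0) := Finset.sum_comm
    _ = ∑ p₁ : PairIdx n, ∑ p₂ : PairIdx n, ∑ i ∈ s,
          (if F p₁ i ∧ G p₂ i then (m p₁ : ℤ) * (m p₂ : ℤ) else 0) :=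
        sum_congr rfl fun p₁ _ => Finset.sum_comm
    _ = _ := by
        refine sum_congr rfl fun p₁ _ => sum_congr rfl fun p₂ _ => ?_
        rw [← Finset.sum_filter, Finset.sum_const, nsmul_eq_mul]

/-- coefficient of `m p₁ m p₂` in `∑ λᵢ²`. -/
def cA (p₁ p₂ : PairIdx n) : ℕ :=
  (Finset.Icc (max (uu p₁) (uu p₂)) (min (vv p₁) (vv p₂))).card
/-- coefficient of `m p₁ m p₂` in `∑ λᵢ λ_{i+1}`. -/
def cB (p₁ p₂ : PairIdx n) : ℕ :=
  (Finset.Icc (max (uu p₁) (uu p₂ - 1)) (min (vv p₁) (vv p₂ - 1))).card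

lemma filtA (p₁ p₂ : PairIdx n) :
    ((Finset.Icc 1 (n-1)).filter fun i => (uu p₁ ≤ i ∧ i ≤ vv p₁) ∧ (uu p₂ ≤ i ∧ i ≤ vv p₂))
      = Finset.Icc (max (uu p₁) (uu p₂)) (min (vv p₁) (vv p₂)) := by
  have h1 := vv_lt p₁; have h2 : 1 ≤ uu p₁ := Nat.le_add_left 1 _
  ext i
  simp only [Finset.mem_filter, Finset.mem_Icc]
  omega

lemma filtB (p₁ p₂ : PairIdx n) :
    ((Finset.Icc 1 (n-2)).filter fun i => (uu p₁ ≤ i ∧ i ≤ vv p₁) ∧ (uu p₂ ≤ i + 1 ∧ i + 1 ≤ vv p₂))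
      = Finset.Icc (max (uu p₁) (uu p₂ - 1)) (min (vv p₁) (vv p₂ - 1)) := by
  have h1 := vv_lt p₂; have h2 : 1 ≤ uu p₁ := Nat.le_add_left 1 _
  have h3 : 1 ≤ uu p₂ := Nat.le_add_left 1 _
  ext i
  simp only [Finset.mem_filter, Finset.mem_Icc]
  omega

lemma sumA (m : PairIdx n → ℕ) :
    (∑ i ∈ Finset.Icc 1 (n-1), (lam n m i : ℤ) ^ 2)
      = ∑ p₁ : PairIdx n, ∑ p₂ : PairIdx n, (cA p₁ p₂ : ℤ) * ((m p₁ : ℤ) * (m p₂ : ℤ)) := by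
  simp only [lam_cast, pow_two]
  rw [expand m (Finset.Icc 1 (n-1)) (fun p i => uu p ≤ i ∧ i ≤ vv p)
    (fun p i => uu p ≤ i ∧ i ≤ vv p)]
  refine sum_congr rfl fun p₁ _ => sum_congr rfl fun p₂ _ => ?_
  rw [show ((Finset.Icc 1 (n-1)).filter fun i =>
      (uu p₁ ≤ i ∧ i ≤ vv p₁) ∧ (uu p₂ ≤ i ∧ i ≤ vv p₂)) = _ from filtA p₁ p₂]
  rfl

lemma sumB (m : PairIdx n → ℕ) :
    (∑ i ∈ Finset.Icc 1 (n-2), (lam n m i : ℤ) * (lam n m (i+1) : ℤ))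
      = ∑ p₁ : PairIdx n, ∑ p₂ : PairIdx n, (cB p₁ p₂ : ℤ) * ((m p₁ : ℤ) * (m p₂ : ℤ)) := by
  simp only [lam_cast]
  rw [expand m (Finset.Icc 1 (n-2)) (fun p i => uu p ≤ i ∧ i ≤ vv p)
    (fun p i => uu p ≤ i + 1 ∧ i + 1 ≤ vv p)]
  refine sum_congr rfl fun p₁ _ => sum_congr rfl fun p₂ _ => ?_
  rw [show ((Finset.Icc 1 (n-2)).filter fun i =>
      (uu p₁ ≤ i ∧ i ≤ vv p₁) ∧ (uu p₂ ≤ i + 1 ∧ i + 1 ≤ vv p₂)) = _ from filtB p₁ p₂]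
  rfl

/-- `½kᵀAk` as a double sum over pairs of positive roots. -/
lemma halfCartan_eq (hn : 2 ≤ n) (m : PairIdx n → ℕ) (k : ℕ → ℕ)
    (hk : ∀ i, 1 ≤ i → i ≤ n - 1 → k i = lam n m i) :
    halfCartanForm n k = ∑ p₁ : PairIdx n, ∑ p₂ : PairIdx n,
      ((cA p₁ p₂ : ℤ) - (cB p₁ p₂ : ℤ)) * ((m p₁ : ℤ) * (m p₂ : ℤ)) := by
  have e1 : (∑ i ∈ Finset.Icc 1 (n - 1), (k i : ℤ) ^ 2)
      = ∑ i ∈ Finset.Icc 1 (n-1), (lam n m i : ℤ) ^ 2 := by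
    refine sum_congr rfl fun i hi => ?_
    rw [Finset.mem_Icc] at hi
    rw [hk i hi.1 hi.2]
  have e2 : (∑ i ∈ Finset.Icc 1 (n - 2), (k i : ℤ) * (k (i+1) : ℤ))
      = ∑ i ∈ Finset.Icc 1 (n-2), (lam n m i : ℤ) * (lam n m (i+1) : ℤ) := by
    refine sum_congr rfl fun i hi => ?_
    rw [Finset.mem_Icc] at hi
    rw [hk i hi.1 (by omega), hk (i+1) (by omega) (by omega)]
  rw [halfCartanForm, e1, e2, sumA, sumB, ← Finset.sum_sub_distrib]
  refine sum_congr rfl fun p₁ _ => ?_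
  rw [← Finset.sum_sub_distrib]
  refine sum_congr rfl fun p₂ _ => by ring

/-- A double sum with pointwise-symmetrically-nonnegative coefficients is nonnegative. -/
lemma main_step (m : PairIdx n → ℕ) (w : PairIdx n → PairIdx n → ℤ)
    (hw : ∀ p₁ p₂ : PairIdx n, 0 ≤ w p₁ p₂ + w p₂ p₁) :
    0 ≤ ∑ p₁ : PairIdx n, ∑ p₂ : PairIdx n, w p₁ p₂ * ((m p₁ : ℤ) * (m p₂ : ℤ)) := by
  have h2 : 2 * (∑ p₁ : PairIdx n, ∑ p₂ : PairIdx n, w p₁ p₂ * ((m p₁ : ℤ) * (m p₂ : ℤ)))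
      = ∑ p₁ : PairIdx n, ∑ p₂ : PairIdx n,
          (w p₁ p₂ + w p₂ p₁) * ((m p₁ : ℤ) * (m p₂ : ℤ)) := by
    rw [two_mul]
    nth_rewrite 2 [show (∑ p₁ : PairIdx n, ∑ p₂ : PairIdx n,
        w p₁ p₂ * ((m p₁ : ℤ) * (m p₂ : ℤ)))
      = ∑ p₁ : PairIdx n, ∑ p₂ : PairIdx n, w p₂ p₁ * ((m p₂ : ℤ) * (m p₁ : ℤ)) from
        Finset.sum_comm]
    rw [← Finset.sum_add_distrib]
    refine Finset.sum_congr rfl fun p₁ _ => ?_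
    rw [← Finset.sum_add_distrib]
    refine Finset.sum_congr rfl fun p₂ _ => by ring
  have h3 : 0 ≤ ∑ p₁ : PairIdx n, ∑ p₂ : PairIdx n,
      (w p₁ p₂ + w p₂ p₁) * ((m p₁ : ℤ) * (m p₂ : ℤ)) := by
    refine Finset.sum_nonneg fun p₁ _ => Finset.sum_nonneg fun p₂ _ => ?_
    exact mul_nonneg (hw p₁ p₂) (by positivity)
  linarith [h2 ▸ h3]

lemma keyB' (p₁ p₂ : PairIdx n) :
    ((cA p₁ p₂ : ℤ) - (cB p₁ p₂ : ℤ)) + ((cA p₂ p₁ : ℤ) - (cB p₂ p₁ : ℤ))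
      ≤ (if p₁.1.1 ≤ p₂.1.1 ∧ p₁.1.2 ≤ p₂.1.2 ∧ (p₂.1.1 : ℕ) < (p₁.1.2 : ℕ) then (1:ℤ) else 0)
        + (if p₂.1.1 ≤ p₁.1.1 ∧ p₂.1.2 ≤ p₁.1.2 ∧ (p₁.1.1 : ℕ) < (p₂.1.2 : ℕ) then (1:ℤ) else 0) := by
  have h1 := uu_le_vv p₁; have h2 := uu_le_vv p₂
  simp only [cA, cB, uu, vv, Nat.card_Icc, Fin.le_def, Fin.lt_def] at *
  split_ifs <;> omega

set_option maxHeartbeats 3200000 in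
lemma keyB (p₁ p₂ : PairIdx n) :
    ((cA p₁ p₂ : ℤ) - (cB p₁ p₂ : ℤ)) + ((cA p₂ p₁ : ℤ) - (cB p₂ p₁ : ℤ))
      ≤ (((if p₁.1.1 < p₂.1.1 ∧ p₁.1.2 < p₂.1.2 ∧ (p₂.1.1 : ℕ) + 1 < (p₁.1.2 : ℕ) then (1:ℤ) else 0)
        + (if p₁.1.1 = p₂.1.1 ∧ p₁.1.2 ≤ p₂.1.2 then (1:ℤ) else 0)
        + (if p₁.1.2 = p₂.1.2 ∧ p₁.1.1 < p₂.1.1 then (1:ℤ) else 0)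
        + (if (p₁.1.2 : ℕ) = (p₁.1.1 : ℕ) + 1 ∧ p₂.1.1 < p₁.1.1 ∧ p₁.1.2 < p₂.1.2 then (1:ℤ) else 0))
        + ((if p₂.1.1 < p₁.1.1 ∧ p₂.1.2 < p₁.1.2 ∧ (p₁.1.1 : ℕ) + 1 < (p₂.1.2 : ℕ) then (1:ℤ) else 0)
        + (if p₂.1.1 = p₁.1.1 ∧ p₂.1.2 ≤ p₁.1.2 then (1:ℤ) else 0)
        + (if p₂.1.2 = p₁.1.2 ∧ p₂.1.1 < p₁.1.1 then (1:ℤ) else 0)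
        + (if (p₂.1.2 : ℕ) = (p₂.1.1 : ℕ) + 1 ∧ p₁.1.1 < p₂.1.1 ∧ p₂.1.2 < p₁.1.2 then (1:ℤ) else 0))) := by
  have h1 := uu_le_vv p₁; have h2 := uu_le_vv p₂
  simp only [cA, cB, uu, vv, Nat.card_Icc, Fin.le_def, Fin.lt_def, Fin.ext_iff] at *
  split_ifs <;> omega

/-- cast of a double indicator sum. -/
lemma cast_double (m : PairIdx n → ℕ) (c : PairIdx n → PairIdx n → Prop)
    [∀ p₁ p₂, Decidable (c p₁ p₂)] :
    ((∑ p₁ : PairIdx n, ∑ p₂ : PairIdx n, if c p₁ p₂ then m p₁ * m p₂ else 0 : ℕ) : ℤ)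
      = ∑ p₁ : PairIdx n, ∑ p₂ : PairIdx n,
          (if c p₁ p₂ then (1:ℤ) else 0) * ((m p₁ : ℤ) * (m p₂ : ℤ)) := by
  push_cast
  refine Finset.sum_congr rfl fun p₁ _ => Finset.sum_congr rfl fun p₂ _ => ?_
  split_ifs <;> ring

end QFaux

open QFaux in
/-- For every `k ∈ ℕ^{n-1}` and every nonnegative integer solution `m` of `λᵢ(m) = kᵢ`, the
differences `B(m) - ½ kᵀAk` and `B'(m) - ½ kᵀAk` are nonnegative integers. -/
theorem quadratic_form_differences_nonneg (n : ℕ) (hn : 2 ≤ n)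
    (m : PairIdx n → ℕ) (k : ℕ → ℕ) (hk : ∀ i, 1 ≤ i → i ≤ n - 1 → k i = lam n m i) :
    0 ≤ (Bform n m : ℤ) - halfCartanForm n k ∧
    0 ≤ (Bform' n m : ℤ) - halfCartanForm n k := by
  rw [QFaux.halfCartan_eq hn m k hk]
  constructor
  · -- the `B` form
    have hB : (Bform n m : ℤ) = ∑ p₁ : PairIdx n, ∑ p₂ : PairIdx n,
        ((if p₁.1.1 < p₂.1.1 ∧ p₁.1.2 < p₂.1.2 ∧ (p₂.1.1 : ℕ) + 1 < (p₁.1.2 : ℕ) then (1:ℤ) else 0)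
        + (if p₁.1.1 = p₂.1.1 ∧ p₁.1.2 ≤ p₂.1.2 then (1:ℤ) else 0)
        + (if p₁.1.2 = p₂.1.2 ∧ p₁.1.1 < p₂.1.1 then (1:ℤ) else 0)
        + (if (p₁.1.2 : ℕ) = (p₁.1.1 : ℕ) + 1 ∧ p₂.1.1 < p₁.1.1 ∧ p₁.1.2 < p₂.1.2 then (1:ℤ) else 0))
          * ((m p₁ : ℤ) * (m p₂ : ℤ)) := by
      rw [Bform, Nat.cast_add, Nat.cast_add, Nat.cast_add,
        QFaux.cast_double m _, QFaux.cast_double m _, QFaux.cast_double m _,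
        QFaux.cast_double m _, ← Finset.sum_add_distrib, ← Finset.sum_add_distrib,
        ← Finset.sum_add_distrib]
      refine Finset.sum_congr rfl fun p₁ _ => ?_
      rw [← Finset.sum_add_distrib, ← Finset.sum_add_distrib, ← Finset.sum_add_distrib]
      refine Finset.sum_congr rfl fun p₂ _ => by ring
    rw [hB, ← Finset.sum_sub_distrib]
    have := QFaux.main_step m (fun p₁ p₂ =>
        ((if p₁.1.1 < p₂.1.1 ∧ p₁.1.2 < p₂.1.2 ∧ (p₂.1.1 : ℕ) + 1 < (p₁.1.2 : ℕ) then (1:ℤ) else 0)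
        + (if p₁.1.1 = p₂.1.1 ∧ p₁.1.2 ≤ p₂.1.2 then (1:ℤ) else 0)
        + (if p₁.1.2 = p₂.1.2 ∧ p₁.1.1 < p₂.1.1 then (1:ℤ) else 0)
        + (if (p₁.1.2 : ℕ) = (p₁.1.1 : ℕ) + 1 ∧ p₂.1.1 < p₁.1.1 ∧ p₁.1.2 < p₂.1.2 then (1:ℤ) else 0))
        - ((cA p₁ p₂ : ℤ) - (cB p₁ p₂ : ℤ)))
      (fun p₁ p₂ => by have := QFaux.keyB p₁ p₂; linarith)
    calc (0:ℤ) ≤ _ := this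
      _ = _ := by
        refine Finset.sum_congr rfl fun p₁ _ => ?_
        rw [← Finset.sum_sub_distrib]
        refine Finset.sum_congr rfl fun p₂ _ => by ring
  · -- the `B'` form
    have hB' : (Bform' n m : ℤ) = ∑ p₁ : PairIdx n, ∑ p₂ : PairIdx n,
        (if p₁.1.1 ≤ p₂.1.1 ∧ p₁.1.2 ≤ p₂.1.2 ∧ (p₂.1.1 : ℕ) < (p₁.1.2 : ℕ) then (1:ℤ) else 0)
          * ((m p₁ : ℤ) * (m p₂ : ℤ)) := QFaux.cast_double m _
    rw [hB', ← Finset.sum_sub_distrib]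
    have := QFaux.main_step m (fun p₁ p₂ =>
        (if p₁.1.1 ≤ p₂.1.1 ∧ p₁.1.2 ≤ p₂.1.2 ∧ (p₂.1.1 : ℕ) < (p₁.1.2 : ℕ) then (1:ℤ) else 0)
        - ((cA p₁ p₂ : ℤ) - (cB p₁ p₂ : ℤ)))
      (fun p₁ p₂ => by have := QFaux.keyB' p₁ p₂; linarith)
    calc (0:ℤ) ≤ _ := this
      _ = _ := by
        refine Finset.sum_congr rfl fun p₁ _ => ?_
        rw [← Finset.sum_sub_distrib]
        refine Finset.sum_congr rfl fun p₂ _ => by ring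
end
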